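/- Let G be a finite commutative group and let ⟨·,·⟩ : G × G → ℂ* be a nondegenerate involutive bicharacter, i.e. the map g ↦ ⟨g,·⟩ is a group isomorphism from G onto the group Hom(G, ℂ*) of characters of G, and ⟨g,g'⟩ = 1 if and only if ⟨g',g⟩ = 1. For a subgroup K of G let K† = {g ∈ G | ⟨h,g⟩ = 1 for all h ∈ K} (a subgroup of G). Let H be a subgroup with H ⊆ H† and let B be any subgroup of G. Then |(H† ∩ B)/(H ∩ B)| · |(H† ∩ B†)/(H ∩ B†)| = |H†/H|, where |·| denotes the cardinality of the quotient group. -/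

import Mathlib

/-- For a bicharacter `χ` on a commutative group `G` and a subgroup `K`, the subgroup
`K† = {g ∈ G | ⟨h,g⟩ = 1 for all h ∈ K}`. -/
def bidual {G : Type*} [CommGroup G] (χ : G → (G →* ℂˣ)) (K : Subgroup G) : Subgroup G where
  carrier := {g | ∀ h ∈ K, χ h g = 1}
  one_mem' := fun h _ => map_one (χ h)
  mul_mem' := fun {a b} ha hb h hK => by rw [map_mul, ha h hK, hb h hK, one_mul]
  inv_mem' := fun {a} ha h hK => by rw [map_inv, ha h hK, inv_one]

section Aux

variable {G : Type*} [CommGroup G] [Fintype G]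

lemma bidual_mem {χ : G → (G →* ℂˣ)} {K : Subgroup G} {g : G} :
    g ∈ bidual χ K ↔ ∀ h ∈ K, χ h g = 1 := Iff.rfl

variable (Φ : G ≃* (G →* ℂˣ))

/-- Key cardinality fact: `|K†| * |K| = |G|`. -/
lemma bidual_card_mul (hinvol : ∀ g g' : G, Φ g g' = 1 ↔ Φ g' g = 1) (K : Subgroup G) :
    Nat.card (bidual (fun g => Φ g) K) * Nat.card K = Nat.card G := by
  haveI : NeZero ((Monoid.exponent (G ⧸ K) : ℂ)) :=
    ⟨Nat.cast_ne_zero.mpr Monoid.exponent_ne_zero_of_finite⟩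
  -- Step 1: K† ≃ {f : G →* ℂˣ // K ≤ f.ker}
  let e1 : (bidual (fun g => Φ g) K) ≃ {f : G →* ℂˣ // K ≤ f.ker} :=
    { toFun := fun g => ⟨Φ g.1, fun h hh => by
        rw [MonoidHom.mem_ker]
        exact (hinvol g.1 h).mpr (g.2 h hh)⟩
      invFun := fun f => ⟨Φ.symm f.1, fun h hh => by
        refine (hinvol h (Φ.symm f.1)).mpr ?_
        rw [Φ.apply_symm_apply]
        exact f.2 hh⟩
      left_inv := fun g => Subtype.ext (Φ.symm_apply_apply g.1)
      right_inv := fun f => Subtype.ext (Φ.apply_symm_apply f.1) }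
  -- Step 2: {f : G →* ℂˣ // K ≤ f.ker} ≃ (G ⧸ K →* ℂˣ)
  let e2 : {f : G →* ℂˣ // K ≤ f.ker} ≃ ((G ⧸ K) →* ℂˣ) :=
    { toFun := fun f => QuotientGroup.lift K f.1 f.2
      invFun := fun ψ => ⟨ψ.comp (QuotientGroup.mk' K), fun h hh => by
        rw [MonoidHom.mem_ker, MonoidHom.comp_apply, QuotientGroup.mk'_apply,
          (QuotientGroup.eq_one_iff h).mpr hh, map_one]⟩
      left_inv := fun f => Subtype.ext (MonoidHom.ext fun g => rfl)
      right_inv := fun ψ => MonoidHom.ext fun q =>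
        QuotientGroup.induction_on q fun g => rfl }
  -- Step 3: |G ⧸ K →* ℂˣ| = |G ⧸ K| by duality
  have e3 : Nat.card ((G ⧸ K) →* ℂˣ) = Nat.card (G ⧸ K) :=
    Nat.card_congr (CommGroup.monoidHom_mulEquiv_of_hasEnoughRootsOfUnity (G ⧸ K) ℂ).some.toEquiv
  have h1 : Nat.card (bidual (fun g => Φ g) K) = Nat.card (G ⧸ K) := by
    rw [Nat.card_congr (e1.trans e2), e3]
  rw [h1, ← Subgroup.card_eq_card_quotient_mul_card_subgroup K]

lemma le_bidual_bidual (hinvol : ∀ g g' : G, Φ g g' = 1 ↔ Φ g' g = 1) (K : Subgroup G) :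
    K ≤ bidual (fun g => Φ g) (bidual (fun g => Φ g) K) := fun k hk h hh =>
  (hinvol h k).mpr (hh k hk)

lemma bidual_bidual (hinvol : ∀ g g' : G, Φ g g' = 1 ↔ Φ g' g = 1) (K : Subgroup G) :
    bidual (fun g => Φ g) (bidual (fun g => Φ g) K) = K := by
  have h1 := bidual_card_mul Φ hinvol K
  have h2 := bidual_card_mul Φ hinvol (bidual (fun g => Φ g) K)
  have hpos : 0 < Nat.card (bidual (fun g => Φ g) K) := Nat.card_pos
  have hcard : Nat.card (bidual (fun g => Φ g) (bidual (fun g => Φ g) K)) = Nat.card K := by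
    have h3 := h2.trans h1.symm
    exact Nat.eq_of_mul_eq_mul_right hpos (h3.trans (mul_comm _ _))
  exact (Subgroup.eq_of_le_of_card_ge (le_bidual_bidual Φ hinvol K) hcard.le).symm

lemma bidual_sup (K L : Subgroup G) :
    bidual (fun g => Φ g) (K ⊔ L) =
      bidual (fun g => Φ g) K ⊓ bidual (fun g => Φ g) L := by
  apply le_antisymm
  · intro g hg
    exact ⟨fun h hh => hg h (Subgroup.mem_sup_left hh),
           fun h hh => hg h (Subgroup.mem_sup_right hh)⟩
  · rintro g ⟨hgK, hgL⟩ h hh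
    obtain ⟨y, hy, z, hz, rfl⟩ := Subgroup.mem_sup.mp hh
    show (Φ (y * z)) g = 1
    rw [map_mul, MonoidHom.mul_apply, hgK y hy, hgL z hz, one_mul]

lemma card_sup_mul_card_inf (K L : Subgroup G) :
    Nat.card (K ⊔ L : Subgroup G) * Nat.card (K ⊓ L : Subgroup G) =
      Nat.card K * Nat.card L := by
  have e := QuotientGroup.quotientInfEquivProdNormalQuotient K L
  have h1 : Nat.card K = Nat.card (K ⧸ L.subgroupOf K) * Nat.card (L.subgroupOf K) :=
    Subgroup.card_eq_card_quotient_mul_card_subgroup _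
  have h2 : Nat.card (K ⊔ L : Subgroup G) =
      Nat.card ((K ⊔ L : Subgroup G) ⧸ L.subgroupOf (K ⊔ L)) *
        Nat.card (L.subgroupOf (K ⊔ L)) :=
    Subgroup.card_eq_card_quotient_mul_card_subgroup _
  have h3 : Nat.card (K ⧸ L.subgroupOf K) =
      Nat.card ((K ⊔ L : Subgroup G) ⧸ L.subgroupOf (K ⊔ L)) := Nat.card_congr e.toEquiv
  have h4 : Nat.card (L.subgroupOf (K ⊔ L)) = Nat.card L :=
    Nat.card_congr (Subgroup.subgroupOfEquivOfLe le_sup_right).toEquiv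
  have h5 : Nat.card (L.subgroupOf K) = Nat.card (K ⊓ L : Subgroup G) := by
    rw [← Subgroup.inf_subgroupOf_left L K]
    exact Nat.card_congr (Subgroup.subgroupOfEquivOfLe (inf_le_left : K ⊓ L ≤ K)).toEquiv
  rw [h2, ← h3, h4, h1, h5]
  ring

lemma relindex_mul_card {K L : Subgroup G} (h : K ≤ L) :
    K.relIndex L * Nat.card K = Nat.card L := by
  have := Subgroup.index_mul_card (K.subgroupOf L)
  rwa [Nat.card_congr (Subgroup.subgroupOfEquivOfLe h).toEquiv] at this

end Aux

/-- "Cleaning" identity in a finite commutative group.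
Let `⟨·,·⟩` be a nondegenerate involutive bicharacter on a finite commutative group `G`
(`g ↦ ⟨g,·⟩` is an isomorphism onto the character group, and `⟨g,g'⟩ = 1 ↔ ⟨g',g⟩ = 1`).
If `H ⊆ H†`, then for any subgroup `B`:
`|(H† ∩ B)/(H ∩ B)| · |(H† ∩ B†)/(H ∩ B†)| = |H†/H|`. -/
theorem cleaning_identity_abelian_group {G : Type*} [CommGroup G] [Fintype G]
    (Φ : G ≃* (G →* ℂˣ))
    (hinvol : ∀ g g' : G, Φ g g' = 1 ↔ Φ g' g = 1)
    (H : Subgroup G) (hH : H ≤ bidual (fun g => Φ g) H)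
    (B : Subgroup G) :
    (H ⊓ B).relIndex (bidual (fun g => Φ g) H ⊓ B)
        * (H ⊓ bidual (fun g => Φ g) B).relIndex
            (bidual (fun g => Φ g) H ⊓ bidual (fun g => Φ g) B)
      = H.relIndex (bidual (fun g => Φ g) H) := by
  set D : Subgroup G → Subgroup G := bidual (fun g => Φ g) with hD
  set H' := D H
  set B' := D B
  set n := Nat.card G
  set x := Nat.card (H ⊓ B : Subgroup G)
  set y := Nat.card (H ⊓ B' : Subgroup G)
  set X := Nat.card (H' ⊓ B : Subgroup G)
  set Y := Nat.card (H' ⊓ B' : Subgroup G)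
  set cH := Nat.card H
  set cH' := Nat.card H'
  set cB := Nat.card B
  set r1 := (H ⊓ B).relIndex (H' ⊓ B)
  set r2 := (H ⊓ B').relIndex (H' ⊓ B')
  set r := H.relIndex H'
  -- relindex identities
  have hr1 : r1 * x = X := relindex_mul_card (inf_le_inf_right B hH)
  have hr2 : r2 * y = Y := relindex_mul_card (inf_le_inf_right B' hH)
  have hr : r * cH = cH' := relindex_mul_card hH
  -- dual identities
  have hDD : ∀ K : Subgroup G, D (D K) = K := bidual_bidual Φ hinvol
  have hsup : ∀ K L : Subgroup G, D (K ⊔ L) = D K ⊓ D L := bidual_sup Φ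
  have hcard : ∀ K : Subgroup G, Nat.card (D K) * Nat.card K = n := bidual_card_mul Φ hinvol
  -- E1' : n * X = y * cH' * cB
  have hs1 : Nat.card (H' ⊔ B : Subgroup G) * X = cH' * cB := card_sup_mul_card_inf H' B
  have hDs1 : D (H' ⊔ B) = H ⊓ B' := by rw [hsup, hDD]
  have hy : y * Nat.card (H' ⊔ B : Subgroup G) = n := by
    have := hcard (H' ⊔ B); rwa [hDs1] at this
  have E1 : n * X = y * cH' * cB := by
    calc n * X = (y * Nat.card (H' ⊔ B : Subgroup G)) * X := by rw [hy]
    _ = y * (Nat.card (H' ⊔ B : Subgroup G) * X) := by ring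
    _ = y * (cH' * cB) := by rw [hs1]
    _ = y * cH' * cB := by ring
  -- E3' : n * x = Y * cH * cB
  have hs3 : Nat.card (H ⊔ B : Subgroup G) * x = cH * cB := card_sup_mul_card_inf H B
  have hDs3 : D (H ⊔ B) = H' ⊓ B' := by rw [hsup]
  have hY : Y * Nat.card (H ⊔ B : Subgroup G) = n := by
    have := hcard (H ⊔ B); rwa [hDs3] at this
  have E3 : n * x = Y * cH * cB := by
    calc n * x = (Y * Nat.card (H ⊔ B : Subgroup G)) * x := by rw [hY]
    _ = Y * (Nat.card (H ⊔ B : Subgroup G) * x) := by ring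
    _ = Y * (cH * cB) := by rw [hs3]
    _ = Y * cH * cB := by ring
  -- key: X * Y * cH = x * y * cH'
  have hnpos : 0 < n := Nat.card_pos
  have key : X * Y * cH = x * y * cH' := by
    apply Nat.eq_of_mul_eq_mul_left hnpos
    calc n * (X * Y * cH) = (n * X) * (Y * cH) := by ring
    _ = (y * cH' * cB) * (Y * cH) := by rw [E1]
    _ = (n * x) * (y * cH') := by rw [E3]; ring
    _ = n * (x * y * cH') := by ring
  -- conclude
  have hpos : 0 < x * y * cH :=
    Nat.mul_pos (Nat.mul_pos Nat.card_pos Nat.card_pos) Nat.card_pos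
  apply Nat.eq_of_mul_eq_mul_right hpos
  calc r1 * r2 * (x * y * cH) = (r1 * x) * (r2 * y) * cH := by ring
  _ = X * Y * cH := by rw [hr1, hr2]
  _ = x * y * cH' := key
  _ = x * y * (r * cH) := by rw [hr]
  _ = r * (x * y * cH) := by ring
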